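/- (Lower semicontinuity of the mixed pseudo-modular.) Let u_i ∈ B̃V^{p(·)}(Ω) be a sequence such that u_i → u in L^{p(·)}(Ω). Then ρ̃_{BV^{p(·)}(Ω)}(u) ≤ liminf_{i→∞} ρ̃_{BV^{p(·)}(Ω)}(u_i). -/

import Mathlib

open MeasureTheory Filter Topology ENNReal Set

noncomputable section

/-- Euclidean space `ℝⁿ`. -/
abbrev Eu (n : ℕ) : Type := EuclideanSpace ℝ (Fin n)

/-- The modular `ρ_{p(·)}(u) = ∫_Ω |u|^{p(x)} dx`. -/
def vModular {n : ℕ} (p : Eu n → ℝ) (Ω : Set (Eu n)) (u : Eu n → ℝ) : ℝ≥0∞ :=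
  ∫⁻ x in Ω, ENNReal.ofReal (|u x| ^ p x)

/-- The gradient modular `∫_Ω |∇u|^{p(x)} dx` (for a.e. differentiable `u`,
`fderiv` is the gradient). -/
def gradModular {n : ℕ} (p : Eu n → ℝ) (Ω : Set (Eu n)) (u : Eu n → ℝ) : ℝ≥0∞ :=
  ∫⁻ x in Ω, ENNReal.ofReal (‖fderiv ℝ u x‖ ^ p x)

/-- Membership in the variable exponent Lebesgue space `L^{p(·)}(Ω)`. -/
def MemLpVar {n : ℕ} (p : Eu n → ℝ) (Ω : Set (Eu n)) (u : Eu n → ℝ) : Prop :=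
  Measurable u ∧ ∃ l : ℝ, 0 < l ∧ vModular p Ω (fun x => u x / l) < ⊤

/-- The Luxemburg norm on `L^{p(·)}(Ω)`. -/
def luxNorm {n : ℕ} (p : Eu n → ℝ) (Ω : Set (Eu n)) (u : Eu n → ℝ) : ℝ :=
  sInf {l : ℝ | 0 < l ∧ vModular p Ω (fun x => u x / l) ≤ 1}

/-- Convergence `v i → u` in `L^{p(·)}(Ω)` (Luxemburg norm convergence). -/
def LpTendsto {n : ℕ} (p : Eu n → ℝ) (Ω : Set (Eu n)) (v : ℕ → Eu n → ℝ)
    (u : Eu n → ℝ) : Prop :=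
  Tendsto (fun i => luxNorm p Ω (fun x => v i x - u x)) atTop (𝓝 0)

/-- `u` is locally Lipschitz on `Ω`. -/
def LocLipOn {n : ℕ} (Ω : Set (Eu n)) (u : Eu n → ℝ) : Prop :=
  ∀ x ∈ Ω, ∃ K : NNReal, ∃ t ∈ 𝓝[Ω] x, LipschitzOnWith K u t

/-- The relaxed mixed pseudo-modular `ρ̃_{BV^{p(·)}(Ω)}(u)`: the infimum of
`liminf_i ∫_Ω |∇u_i|^{p(x)} dx` over all sequences of locally Lipschitz functions
in `L^{p(·)}(Ω)` converging to `u` in `L^{p(·)}(Ω)`. -/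
def bvModular {n : ℕ} (p : Eu n → ℝ) (Ω : Set (Eu n)) (u : Eu n → ℝ) : ℝ≥0∞ :=
  ⨅ (v : ℕ → Eu n → ℝ)
    (_ : (∀ i, LocLipOn Ω (v i) ∧ MemLpVar p Ω (v i)) ∧ LpTendsto p Ω v u),
    Filter.liminf (fun i => gradModular p Ω (v i)) atTop

/-- Membership in the mixed space `B̃V^{p(·)}(Ω)`. -/
def MemBVt {n : ℕ} (p : Eu n → ℝ) (Ω : Set (Eu n)) (u : Eu n → ℝ) : Prop :=
  MemLpVar p Ω u ∧ bvModular p Ω u < ⊤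

/-- The norm `‖u‖_{B̃V^{p(·)}}`. -/
def bvNorm {n : ℕ} (p : Eu n → ℝ) (Ω : Set (Eu n)) (u : Eu n → ℝ) : ℝ :=
  luxNorm p Ω u + sInf {l : ℝ | 0 < l ∧ bvModular p Ω (fun x => u x / l) ≤ 1}

/-- The admissible class `Ã(E)` for the mixed capacity. -/
def admissibleBV {n : ℕ} (p : Eu n → ℝ) (Ω E : Set (Eu n)) : Set (Eu n → ℝ) :=
  {u | MemBVt p Ω u ∧ (∀ x ∈ Ω, 0 ≤ u x ∧ u x ≤ 1) ∧
       ∃ U : Set (Eu n), IsOpen U ∧ E ⊆ U ∧ ∀ x ∈ U ∩ Ω, u x = 1}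

/-- The mixed BV-Sobolev capacity `C̃_{BV^{p(·)}}(E)` (with `inf ∅ = ∞`). -/
def bvCapacity {n : ℕ} (p : Eu n → ℝ) (Ω E : Set (Eu n)) : ℝ≥0∞ :=
  ⨅ (u : Eu n → ℝ) (_ : u ∈ admissibleBV p Ω E), vModular p Ω u + bvModular p Ω u

/-- Divergence of a vector field. -/
def divg {n : ℕ} (φ : Eu n → Eu n) (x : Eu n) : ℝ :=
  ∑ i, fderiv ℝ φ x (EuclideanSpace.single i 1) i

/-- Total variation `‖Du‖(U)` on an open set `U`, via the defining supremum over
`C¹` vector fields compactly supported in `U` with `|φ| ≤ 1`. -/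
def totVarOpen {n : ℕ} (U : Set (Eu n)) (u : Eu n → ℝ) : ℝ≥0∞ :=
  ⨆ (φ : Eu n → Eu n)
    (_ : ContDiff ℝ 1 φ ∧ HasCompactSupport φ ∧ tsupport φ ⊆ U ∧ ∀ x, ‖φ x‖ ≤ 1),
    ENNReal.ofReal (∫ x in U, u x * divg φ x)

/-- Total variation `‖Du‖(A)` of a set `A ⊆ Ω`, extended from open sets. -/
def totVarIn {n : ℕ} (Ω A : Set (Eu n)) (u : Eu n → ℝ) : ℝ≥0∞ :=
  ⨅ (U : Set (Eu n)) (_ : IsOpen U ∧ A ⊆ U ∧ U ⊆ Ω), totVarOpen U u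

/-- `g` is the weak (distributional) gradient of `u` on `Ω`. -/
def IsWeakGrad {n : ℕ} (Ω : Set (Eu n)) (u : Eu n → ℝ) (g : Eu n → Eu n) : Prop :=
  ∀ φ : Eu n → ℝ, ContDiff ℝ 1 φ → HasCompactSupport φ → tsupport φ ⊆ Ω →
    ∀ i : Fin n,
      (∫ x in Ω, u x * (fderiv ℝ φ x (EuclideanSpace.single i 1))) =
        - ∫ x in Ω, g x i * φ x

/-- The Harjulehto–Hästö–Latvala mixed pseudo-modular
`ρ_{BV^{p(·)}(F)}(u) = ‖Du‖(F ∩ Y) + ∫_{F∖Y} |∇u|^{p(x)} dx`, where `Y = {p = 1}`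
and `g` is the weak gradient of `u` on the Sobolev part. -/
def hhlModular {n : ℕ} (p : Eu n → ℝ) (Ω F : Set (Eu n)) (u : Eu n → ℝ)
    (g : Eu n → Eu n) : ℝ≥0∞ :=
  totVarIn Ω (F ∩ {x | p x = 1}) u +
    ∫⁻ x in F \ {x | p x = 1}, ENNReal.ofReal (‖g x‖ ^ p x)

/-- The HHL mixed pseudo-modular for (smooth) functions whose gradient is `fderiv`. -/
def hhlModularSmooth {n : ℕ} (p : Eu n → ℝ) (Ω F : Set (Eu n)) (v : Eu n → ℝ) : ℝ≥0∞ :=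
  totVarIn Ω (F ∩ {x | p x = 1}) v +
    ∫⁻ x in F \ {x | p x = 1}, ENNReal.ofReal (‖fderiv ℝ v x‖ ^ p x)

/-- Membership in the HHL space `BV^{p(·)}(Ω)`: `u ∈ L^{p(·)}(Ω)` and
`inf{λ > 0 : ρ_{BV^{p(·)}(Ω)}(u/λ) ≤ 1} < ∞`. -/
def MemBVp {n : ℕ} (p : Eu n → ℝ) (Ω : Set (Eu n)) (u : Eu n → ℝ) : Prop :=
  MemLpVar p Ω u ∧
    ∃ g : Eu n → Eu n, IsWeakGrad (Ω \ {x | p x = 1}) u g ∧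
      ∃ l : ℝ, 0 < l ∧
        hhlModular p Ω Ω (fun x => u x / l) (fun x => l⁻¹ • g x) ≤ 1

/-- Mollification `u_δ = φ_δ ∗ u` (with `u` extended by zero outside `Ω`),
where `φ_δ(z) = δ^{-n} φ(z/δ)`. -/
def mollify {n : ℕ} (Ω : Set (Eu n)) (u : Eu n → ℝ) (φ : Eu n → ℝ) (δ : ℝ)
    (x : Eu n) : ℝ :=
  ∫ y in Ω, (δ ^ n)⁻¹ * φ (δ⁻¹ • (x - y)) * u y

/-- `p` is (locally) log-Hölder continuous on `Ω` with constant `c`. -/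
def LogHolderOn {n : ℕ} (c : ℝ) (Ω : Set (Eu n)) (p : Eu n → ℝ) : Prop :=
  ∀ x ∈ Ω, ∀ y ∈ Ω, |p x - p y| ≤ c / Real.log (Real.exp 1 + 1 / dist x y)

/-- `p` is globally log-Hölder continuous on `ℝⁿ` with constant `c`. -/
def LogHolderGlobal {n : ℕ} (c : ℝ) (p : Eu n → ℝ) : Prop :=
  LogHolderOn c Set.univ p ∧
    ∃ pinf : ℝ, 1 ≤ pinf ∧ ∀ x, |p x - pinf| ≤ c / Real.log (Real.exp 1 + ‖x‖)

section Helpers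

variable {n : ℕ} {p : Eu n → ℝ} {Ω : Set (Eu n)}

lemma luxNorm_nonneg (p : Eu n → ℝ) (Ω : Set (Eu n)) (f : Eu n → ℝ) :
    0 ≤ luxNorm p Ω f :=
  Real.sInf_nonneg fun _ hl => hl.1.le

lemma pointwise_convex {pp : ℝ} (hpp : 1 ≤ pp) {lam s t : ℝ} (h0 : 0 ≤ lam) (h1 : lam ≤ 1) :
    |lam * s + (1 - lam) * t| ^ pp ≤ lam * |s| ^ pp + (1 - lam) * |t| ^ pp := by
  have habs : |lam * s + (1 - lam) * t| ≤ lam * |s| + (1 - lam) * |t| := by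
    have h1l : (0:ℝ) ≤ 1 - lam := by linarith
    calc |lam * s + (1 - lam) * t| ≤ |lam * s| + |(1 - lam) * t| := abs_add_le _ _
      _ = lam * |s| + (1 - lam) * |t| := by
          rw [abs_mul, abs_mul, abs_of_nonneg h0, abs_of_nonneg h1l]
  calc |lam * s + (1 - lam) * t| ^ pp ≤ (lam * |s| + (1 - lam) * |t|) ^ pp :=
        Real.rpow_le_rpow (abs_nonneg _) habs (by linarith)
    _ ≤ lam * |s| ^ pp + (1 - lam) * |t| ^ pp := by
        have h1l : (0:ℝ) ≤ 1 - lam := by linarith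
        have hsum : lam + (1 - lam) = 1 := by ring
        have := (convexOn_rpow hpp).2 (Set.mem_Ici.2 (abs_nonneg s))
          (Set.mem_Ici.2 (abs_nonneg t)) h0 h1l hsum
        simpa [smul_eq_mul] using this

lemma vModular_convex (hΩm : MeasurableSet Ω) (hpm : Measurable p)
    (hp1 : ∀ x ∈ Ω, 1 ≤ p x) {f g : Eu n → ℝ} (hf : Measurable f) (hg : Measurable g)
    {a b : ℝ} (ha : 0 < a) (hb : 0 < b) :
    vModular p Ω (fun x => (f x + g x) / (a + b)) ≤
      ENNReal.ofReal (a / (a + b)) * vModular p Ω (fun x => f x / a) +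
      ENNReal.ofReal (b / (a + b)) * vModular p Ω (fun x => g x / b) := by
  have hab : 0 < a + b := by linarith
  set lam := a / (a + b) with hlam
  have hlam0 : 0 ≤ lam := by positivity
  have hlam1 : lam ≤ 1 := by rw [hlam, div_le_one hab]; linarith
  have h1lam : 1 - lam = b / (a + b) := by
    rw [hlam, eq_div_iff hab.ne', sub_mul, div_mul_cancel₀ _ hab.ne']; ring
  have key : ∀ x ∈ Ω, ENNReal.ofReal (|(f x + g x) / (a + b)| ^ p x) ≤
      ENNReal.ofReal lam * ENNReal.ofReal (|f x / a| ^ p x) +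
        ENNReal.ofReal (1 - lam) * ENNReal.ofReal (|g x / b| ^ p x) := by
    intro x hx
    rw [← ENNReal.ofReal_mul hlam0, ← ENNReal.ofReal_mul (by linarith),
      ← ENNReal.ofReal_add (mul_nonneg hlam0 (Real.rpow_nonneg (abs_nonneg _) _))
        (mul_nonneg (by linarith) (Real.rpow_nonneg (abs_nonneg _) _))]
    apply ENNReal.ofReal_le_ofReal
    have hxeq : (f x + g x) / (a + b) = lam * (f x / a) + (1 - lam) * (g x / b) := by
      rw [h1lam, hlam]; field_simp
    rw [hxeq]
    exact pointwise_convex (hp1 x hx) hlam0 hlam1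
  have hmf : Measurable fun x => ENNReal.ofReal lam * ENNReal.ofReal (|f x / a| ^ p x) :=
    (((hf.div_const a).abs.pow hpm).ennreal_ofReal).const_mul _
  calc vModular p Ω (fun x => (f x + g x) / (a + b))
      ≤ ∫⁻ x in Ω, (ENNReal.ofReal lam * ENNReal.ofReal (|f x / a| ^ p x) +
          ENNReal.ofReal (1 - lam) * ENNReal.ofReal (|g x / b| ^ p x)) := by
        refine lintegral_mono_ae ((ae_restrict_iff' hΩm).2 (Filter.Eventually.of_forall key))
    _ = ENNReal.ofReal lam * vModular p Ω (fun x => f x / a) +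
        ENNReal.ofReal (1 - lam) * vModular p Ω (fun x => g x / b) := by
        rw [lintegral_add_left' hmf.aemeasurable,
          lintegral_const_mul' _ _ ENNReal.ofReal_ne_top,
          lintegral_const_mul' _ _ ENNReal.ofReal_ne_top]
        rfl
    _ = ENNReal.ofReal (a / (a + b)) * vModular p Ω (fun x => f x / a) +
        ENNReal.ofReal (b / (a + b)) * vModular p Ω (fun x => g x / b) := by
        rw [← hlam, h1lam]

lemma vModular_add_div_le_one (hΩm : MeasurableSet Ω) (hpm : Measurable p)
    (hp1 : ∀ x ∈ Ω, 1 ≤ p x) {f g : Eu n → ℝ} (hf : Measurable f) (hg : Measurable g)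
    {a b : ℝ} (ha : 0 < a) (hb : 0 < b)
    (h1 : vModular p Ω (fun x => f x / a) ≤ 1) (h2 : vModular p Ω (fun x => g x / b) ≤ 1) :
    vModular p Ω (fun x => (f x + g x) / (a + b)) ≤ 1 := by
  have hab : 0 < a + b := by linarith
  refine (vModular_convex hΩm hpm hp1 hf hg ha hb).trans ?_
  calc ENNReal.ofReal (a / (a + b)) * vModular p Ω (fun x => f x / a) +
        ENNReal.ofReal (b / (a + b)) * vModular p Ω (fun x => g x / b)
      ≤ ENNReal.ofReal (a / (a + b)) * 1 + ENNReal.ofReal (b / (a + b)) * 1 :=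
        add_le_add (mul_le_mul_right h1 _) (mul_le_mul_right h2 _)
    _ = ENNReal.ofReal (a / (a + b) + b / (a + b)) := by
        rw [mul_one, mul_one, ENNReal.ofReal_add (by positivity) (by positivity)]
    _ = 1 := by rw [← add_div, div_self hab.ne', ENNReal.ofReal_one]

lemma vModular_scale (hΩm : MeasurableSet Ω) (hp1 : ∀ x ∈ Ω, 1 ≤ p x)
    {f : Eu n → ℝ} {l t : ℝ} (hl : 0 < l) (ht : 1 ≤ t) :
    vModular p Ω (fun x => f x / (t * l)) ≤
      (ENNReal.ofReal t)⁻¹ * vModular p Ω (fun x => f x / l) := by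
  have ht0 : 0 < t := lt_of_lt_of_le one_pos ht
  have key : ∀ x ∈ Ω, ENNReal.ofReal (|f x / (t * l)| ^ p x) ≤
      (ENNReal.ofReal t)⁻¹ * ENNReal.ofReal (|f x / l| ^ p x) := by
    intro x hx
    have habs : |f x / (t * l)| = |f x / l| / t := by
      rw [abs_div, abs_div, abs_mul, abs_of_pos ht0, abs_of_pos hl]
      rw [div_div]; ring_nf
    have hpow : |f x / (t * l)| ^ p x ≤ |f x / l| ^ p x / t := by
      rw [habs, Real.div_rpow (abs_nonneg _) ht0.le]
      have h1 : t ≤ t ^ p x := by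
        calc t = t ^ (1 : ℝ) := (Real.rpow_one t).symm
          _ ≤ t ^ p x := Real.rpow_le_rpow_of_exponent_le ht (hp1 x hx)
      exact div_le_div_of_nonneg_left (Real.rpow_nonneg (abs_nonneg _) _) ht0 h1
    calc ENNReal.ofReal (|f x / (t * l)| ^ p x)
        ≤ ENNReal.ofReal (|f x / l| ^ p x / t) := ENNReal.ofReal_le_ofReal hpow
      _ = (ENNReal.ofReal t)⁻¹ * ENNReal.ofReal (|f x / l| ^ p x) := by
          rw [ENNReal.ofReal_div_of_pos ht0, div_eq_mul_inv, mul_comm]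
  calc vModular p Ω (fun x => f x / (t * l))
      ≤ ∫⁻ x in Ω, (ENNReal.ofReal t)⁻¹ * ENNReal.ofReal (|f x / l| ^ p x) :=
        lintegral_mono_ae ((ae_restrict_iff' hΩm).2 (Filter.Eventually.of_forall key))
    _ = (ENNReal.ofReal t)⁻¹ * vModular p Ω (fun x => f x / l) := by
        rw [lintegral_const_mul' _ _ (by simp only [ne_eq, ENNReal.inv_eq_top, ENNReal.ofReal_eq_zero, not_le]; exact ht0)]
        rfl

lemma exists_scale_le_one (hΩm : MeasurableSet Ω) (hp1 : ∀ x ∈ Ω, 1 ≤ p x)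
    {f : Eu n → ℝ} (hf : MemLpVar p Ω f) :
    ∃ l : ℝ, 0 < l ∧ vModular p Ω (fun x => f x / l) ≤ 1 := by
  obtain ⟨hm, l, hl, hfin⟩ := hf
  set V := vModular p Ω (fun x => f x / l) with hV
  set t : ℝ := V.toReal + 1 with htdef
  have ht : 1 ≤ t := le_add_of_nonneg_left ENNReal.toReal_nonneg
  have ht0 : 0 < t := lt_of_lt_of_le one_pos ht
  refine ⟨t * l, by positivity, ?_⟩
  have hVle : V ≤ ENNReal.ofReal t := by
    rw [htdef, ENNReal.ofReal_add ENNReal.toReal_nonneg zero_le_one,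
      ENNReal.ofReal_toReal hfin.ne, ENNReal.ofReal_one]
    exact le_self_add
  calc vModular p Ω (fun x => f x / (t * l))
      ≤ (ENNReal.ofReal t)⁻¹ * V := vModular_scale hΩm hp1 hl ht
    _ ≤ (ENNReal.ofReal t)⁻¹ * ENNReal.ofReal t := mul_le_mul_right hVle _
    _ = 1 := ENNReal.inv_mul_cancel (by simp only [ne_eq, ENNReal.ofReal_eq_zero, not_le]; exact ht0) ENNReal.ofReal_ne_top

lemma luxNorm_triangle (hΩm : MeasurableSet Ω) (hpm : Measurable p)
    (hp1 : ∀ x ∈ Ω, 1 ≤ p x) {f g : Eu n → ℝ}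
    (hf : MemLpVar p Ω f) (hg : MemLpVar p Ω g) :
    luxNorm p Ω (fun x => f x + g x) ≤ luxNorm p Ω f + luxNorm p Ω g := by
  have hSf : {l : ℝ | 0 < l ∧ vModular p Ω (fun x => f x / l) ≤ 1}.Nonempty := by
    obtain ⟨l, hl, hle⟩ := exists_scale_le_one hΩm hp1 hf; exact ⟨l, hl, hle⟩
  have hSg : {l : ℝ | 0 < l ∧ vModular p Ω (fun x => g x / l) ≤ 1}.Nonempty := by
    obtain ⟨l, hl, hle⟩ := exists_scale_le_one hΩm hp1 hg; exact ⟨l, hl, hle⟩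
  have hbdd : ∀ h : Eu n → ℝ,
      BddBelow {l : ℝ | 0 < l ∧ vModular p Ω (fun x => h x / l) ≤ 1} :=
    fun h => ⟨0, fun l hl => hl.1.le⟩
  refine le_of_forall_pos_le_add fun ε hε => ?_
  have h1 : luxNorm p Ω f < luxNorm p Ω f + ε / 2 := by linarith
  have h2 : luxNorm p Ω g < luxNorm p Ω g + ε / 2 := by linarith
  obtain ⟨a, haS, halt⟩ := (csInf_lt_iff (hbdd f) hSf).1 h1
  obtain ⟨b, hbS, hblt⟩ := (csInf_lt_iff (hbdd g) hSg).1 h2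
  have hmem : a + b ∈ {l : ℝ | 0 < l ∧ vModular p Ω (fun x => (f x + g x) / l) ≤ 1} :=
    ⟨by have := haS.1; have := hbS.1; linarith,
      vModular_add_div_le_one hΩm hpm hp1 hf.1 hg.1 haS.1 hbS.1 haS.2 hbS.2⟩
  have : luxNorm p Ω (fun x => f x + g x) ≤ a + b := csInf_le (hbdd _) hmem
  linarith

lemma memLpVar_sub (hΩm : MeasurableSet Ω) (hpm : Measurable p)
    (hp1 : ∀ x ∈ Ω, 1 ≤ p x) {f g : Eu n → ℝ}
    (hf : MemLpVar p Ω f) (hg : MemLpVar p Ω g) :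
    MemLpVar p Ω (fun x => f x - g x) := by
  obtain ⟨hfm, a, ha, hfa⟩ := hf
  obtain ⟨hgm, b, hb, hgb⟩ := hg
  refine ⟨hfm.sub hgm, a + b, by linarith, ?_⟩
  have hneg : vModular p Ω (fun x => -g x / b) = vModular p Ω (fun x => g x / b) := by
    simp only [vModular, neg_div, abs_neg]
  have hcc := vModular_convex hΩm hpm hp1 hfm hgm.neg ha hb
  have heq : (fun x => (f x + -g x) / (a + b)) = (fun x => (f x - g x) / (a + b)) := by
    funext x; ring
  simp only [Pi.neg_apply] at hcc
  rw [heq, hneg] at hcc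
  calc vModular p Ω (fun x => (f x - g x) / (a + b))
      ≤ ENNReal.ofReal (a / (a + b)) * vModular p Ω (fun x => f x / a) +
        ENNReal.ofReal (b / (a + b)) * vModular p Ω (fun x => g x / b) := hcc
    _ < ⊤ := ENNReal.add_lt_top.2
        ⟨ENNReal.mul_lt_top ENNReal.ofReal_lt_top hfa,
         ENNReal.mul_lt_top ENNReal.ofReal_lt_top hgb⟩

end Helpers

/-- The variable exponent Sobolev capacity `C_{p(·)}(E)`: infimum of
`∫ |u|^{p(x)} + |∇u|^{p(x)} dx` over `u ∈ W^{1,p(·)}(ℝⁿ)` with `u ≥ 1` on an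
open set containing `E`. -/

def sobolevCapacity {n : ℕ} (p : Eu n → ℝ) (E : Set (Eu n)) : ℝ≥0∞ :=
  ⨅ (u : Eu n → ℝ) (g : Eu n → Eu n)
    (_ : MemLpVar p Set.univ u ∧ IsWeakGrad Set.univ u g ∧
         MemLpVar p Set.univ (fun x => ‖g x‖) ∧
         ∃ U : Set (Eu n), IsOpen U ∧ E ⊆ U ∧ ∀ x ∈ U, 1 ≤ u x),
    vModular p Set.univ u + ∫⁻ x, ENNReal.ofReal (‖g x‖ ^ p x)

/-- lower semicontinuity of the mixed pseudo-modular with respect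
to `L^{p(·)}(Ω)` convergence. -/
theorem bvModular_lowerSemicontinuous
    {n : ℕ} (p : Eu n → ℝ) (Ω : Set (Eu n)) (hΩ : IsOpen Ω)
    (hpm : Measurable p) (hp1 : ∀ x ∈ Ω, 1 ≤ p x) (hpb : ∃ M : ℝ, ∀ x ∈ Ω, p x ≤ M)
    (u : Eu n → ℝ) (ui : ℕ → Eu n → ℝ)
    (hui : ∀ i, MemBVt p Ω (ui i)) (hu : MemLpVar p Ω u)
    (hconv : LpTendsto p Ω ui u) :
    bvModular p Ω u ≤ Filter.liminf (fun i => bvModular p Ω (ui i)) atTop := by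
  have hΩm : MeasurableSet Ω := hΩ.measurableSet
  refine le_of_forall_gt_imp_ge_of_dense fun c hc => ?_
  have hfreq : ∃ᶠ i in atTop, bvModular p Ω (ui i) < c :=
    Filter.frequently_lt_of_liminf_lt (by isBoundedDefault) hc
  obtain ⟨φ, hφmono, hφ⟩ := Filter.extraction_of_frequently_atTop hfreq
  have hex : ∀ k : ℕ, ∃ w : Eu n → ℝ, (LocLipOn Ω w ∧ MemLpVar p Ω w) ∧
      gradModular p Ω w < c ∧
      luxNorm p Ω (fun x => w x - ui (φ k) x) < 1 / ((k : ℝ) + 1) := by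
    intro k
    have h1 : bvModular p Ω (ui (φ k)) < c := hφ k
    rw [bvModular] at h1
    simp only [iInf_lt_iff] at h1
    obtain ⟨v, hv, hvless⟩ := h1
    have hfr : ∃ᶠ m in atTop, gradModular p Ω (v m) < c :=
      Filter.frequently_lt_of_liminf_lt (by isBoundedDefault) hvless
    have hev : ∀ᶠ m in atTop,
        luxNorm p Ω (fun x => v m x - ui (φ k) x) < 1 / ((k : ℝ) + 1) :=
      Filter.Tendsto.eventually_lt_const (by positivity) hv.2
    obtain ⟨m, hm1, hm2⟩ := (hfr.and_eventually hev).exists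
    exact ⟨v m, hv.1 m, hm1, hm2⟩
  choose w hw1 hw2 hw3 using hex
  have hwlp : ∀ k, MemLpVar p Ω (w k) := fun k => (hw1 k).2
  have huilp : ∀ i, MemLpVar p Ω (ui i) := fun i => (hui i).1
  have htri : ∀ k, luxNorm p Ω (fun x => w k x - u x) ≤
      1 / ((k : ℝ) + 1) + luxNorm p Ω (fun x => ui (φ k) x - u x) := by
    intro k
    have hstep : luxNorm p Ω (fun x => w k x - u x) ≤
        luxNorm p Ω (fun x => w k x - ui (φ k) x) +
        luxNorm p Ω (fun x => ui (φ k) x - u x) := by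
      have heq : (fun x => w k x - u x) =
          (fun x => (w k x - ui (φ k) x) + (ui (φ k) x - u x)) := by
        funext x; ring
      rw [heq]
      exact luxNorm_triangle hΩm hpm hp1
        (memLpVar_sub hΩm hpm hp1 (hwlp k) (huilp (φ k)))
        (memLpVar_sub hΩm hpm hp1 (huilp (φ k)) hu)
    exact hstep.trans (add_le_add_left (hw3 k).le _)
  have hLp : LpTendsto p Ω w u := by
    refine squeeze_zero (fun k => luxNorm_nonneg p Ω _) htri ?_
    have hA : Tendsto (fun k : ℕ => 1 / ((k : ℝ) + 1)) atTop (𝓝 0) :=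
      tendsto_one_div_add_atTop_nhds_zero_nat
    have hB : Tendsto (fun k : ℕ => luxNorm p Ω (fun x => ui (φ k) x - u x)) atTop (𝓝 0) :=
      hconv.comp hφmono.tendsto_atTop
    simpa using hA.add hB
  have key : bvModular p Ω u ≤ Filter.liminf (fun k => gradModular p Ω (w k)) atTop :=
    iInf₂_le w ⟨hw1, hLp⟩
  refine key.trans ?_
  exact Filter.liminf_le_of_frequently_le'
    (Filter.Eventually.frequently (Filter.Eventually.of_forall fun k => (hw2 k).le))
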